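/- The BA fixed point yields the optimal dual variable for fixed ζ: let ζ ∈ ℝ, let p be a positive probability vector on Fin M, let r be a positive BA fixed point for p, and set a* i = p i / (∑ j, Real.exp (−ζ * d i j) * r j). Then for every a : Fin M → ℝ with a i > 0 for all i and ∑ i, a i * Real.exp (−ζ * d i j) ≤ 1 for every j, one has ∑ i, p i * Real.log (a i) ≤ ∑ i, p i * Real.log (a* i). -/
import Mathlib


/-- The BA fixed point yields the optimal dual variable for fixed `ζ`: with
`a* i = p i / ∑ j, exp(−ζ d i j) * r j` for a positive BA fixed point `r` of `p`, every
positive `a` satisfying the dual inequality constraints has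
`∑ i, p i * log (a i) ≤ ∑ i, p i * log (a* i)`. -/
theorem ba_fixed_point_optimal_dual (M N : ℕ) (hM : 1 ≤ M) (hN : 1 ≤ N)
    (d : Fin M → Fin N → ℝ) (hd : ∀ i j, 0 ≤ d i j)
    (ζ : ℝ)
    (p : Fin M → ℝ) (hp : ∀ i, 0 < p i) (hp1 : ∑ i, p i = 1)
    (r : Fin N → ℝ) (hr : ∀ j, 0 < r j) (hr1 : ∑ j, r j = 1)
    (hrfix : ∀ j, r j =
      ∑ i, p i * Real.exp (-ζ * d i j) * r j / (∑ k, Real.exp (-ζ * d i k) * r k))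
    (astar : Fin M → ℝ)
    (hastar : ∀ i, astar i = p i / (∑ j, Real.exp (-ζ * d i j) * r j)) :
    ∀ a : Fin M → ℝ, (∀ i, 0 < a i) →
      (∀ j, ∑ i, a i * Real.exp (-ζ * d i j) ≤ 1) →
      ∑ i, p i * Real.log (a i) ≤ ∑ i, p i * Real.log (astar i) := by
  intro a ha hcon
  set D : Fin M → ℝ := fun i => ∑ j, Real.exp (-ζ * d i j) * r j with hDdef
  have hD : ∀ i, 0 < D i := by
    intro i
    apply Finset.sum_pos (fun j _ => mul_pos (Real.exp_pos _) (hr j))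
    exact Finset.univ_nonempty_iff.mpr (Fin.pos_iff_nonempty.mp hN)
  have hast : ∀ i, 0 < astar i := fun i => (hastar i) ▸ div_pos (hp i) (hD i)
  have hsum : ∑ i, a i * D i ≤ 1 := by
    have : ∑ i, a i * D i = ∑ j, (∑ i, a i * Real.exp (-ζ * d i j)) * r j := by
      simp only [hDdef, Finset.mul_sum, Finset.sum_mul]
      rw [Finset.sum_comm]
      congr 1; ext j; congr 1; ext i; ring
    rw [this]
    calc ∑ j, (∑ i, a i * Real.exp (-ζ * d i j)) * r j
        ≤ ∑ j, 1 * r j := by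
          apply Finset.sum_le_sum
          intro j _
          exact mul_le_mul_of_nonneg_right (hcon j) (hr j).le
      _ = 1 := by simp [hr1]
  have key : ∀ i, p i * Real.log (a i) - p i * Real.log (astar i) ≤ a i * D i - p i := by
    intro i
    have h1 : Real.log (a i) - Real.log (astar i) = Real.log (a i / astar i) := by
      rw [Real.log_div (ha i).ne' (hast i).ne']
    have h2 : Real.log (a i / astar i) ≤ a i / astar i - 1 :=
      Real.log_le_sub_one_of_pos (div_pos (ha i) (hast i))
    have h3 : p i * (a i / astar i) = a i * D i := by
      rw [hastar i]
      rw [div_div_eq_mul_div, mul_comm, div_mul_cancel₀ _ (hp i).ne']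
    calc p i * Real.log (a i) - p i * Real.log (astar i)
        = p i * (Real.log (a i) - Real.log (astar i)) := by ring
      _ = p i * Real.log (a i / astar i) := by rw [h1]
      _ ≤ p i * (a i / astar i - 1) :=
          mul_le_mul_of_nonneg_left h2 (hp i).le
      _ = a i * D i - p i := by rw [mul_sub, h3, mul_one]
  have := Finset.sum_le_sum (fun i (_ : i ∈ Finset.univ) => key i)
  rw [Finset.sum_sub_distrib, Finset.sum_sub_distrib, hp1] at this
  linarith
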